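/- Let λ > 0, 0 < ℓ̲ ≤ ℓ̄ < ∞ and d̄ ≥ 2. On a probability space, let ℓ₀ be a random variable with ℓ̲ ≤ ℓ₀ ≤ ℓ̄ almost surely, and let ξ be a random variable with values in [1, ∞] satisfying ξ ≥ 1 + (2/d̄)·(e^{2ℓ̲√(2λ)} − 1)/(e^{2ℓ̄√(2λ)} + 1) almost surely. Then E[ ln( 1 + (1 − e^{−2√(2λ)·ℓ₀})/(ξ − 1) ) ] ≤ ln( 1 + (d̄/2)·e^{−2√(2λ)·ℓ̄}·(e^{4√(2λ)·ℓ̄} − 1)/(e^{2√(2λ)·ℓ̲} − 1) ), where the integrand is interpreted as 0 on the event {ξ = ∞}. -/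

import Mathlib

open MeasureTheory Real

/-- Let `λ > 0`, `0 < ℓ̲ ≤ ℓ̄`, `d̄ ≥ 2` an integer, `ℓ₀ ∈ [ℓ̲, ℓ̄]` a.s., and `ξ` a
`[1,∞]`-valued random variable with `ξ ≥ 1 + (2/d̄)(e^{2ℓ̲√(2λ)}−1)/(e^{2ℓ̄√(2λ)}+1)` a.s.
Then `E[ln(1 + (1 − e^{−2√(2λ)ℓ₀})/(ξ − 1))] ≤
ln(1 + (d̄/2)·e^{−2√(2λ)ℓ̄}·(e^{4√(2λ)ℓ̄} − 1)/(e^{2√(2λ)ℓ̲} − 1))`, the integrand being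
interpreted as `0` where `ξ = ∞`. -/
theorem stmt17 {Ω : Type*} [MeasurableSpace Ω] (μ : Measure Ω) [IsProbabilityMeasure μ]
    (lam llow lbar : ℝ) (dbar : ℕ)
    (hlam : 0 < lam) (hllow : 0 < llow) (hlord : llow ≤ lbar) (hdbar : 2 ≤ dbar)
    (ℓ₀ : Ω → ℝ) (ξ : Ω → EReal)
    (hℓmeas : Measurable ℓ₀) (hξmeas : Measurable ξ)
    (hℓbd : ∀ᵐ ω ∂μ, llow ≤ ℓ₀ ω ∧ ℓ₀ ω ≤ lbar)
    (hξ1 : ∀ᵐ ω ∂μ, (1 : EReal) ≤ ξ ω)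
    (hξbd : ∀ᵐ ω ∂μ, ((1 + (2 / (dbar : ℝ)) *
      ((Real.exp (2 * llow * Real.sqrt (2 * lam)) - 1) /
        (Real.exp (2 * lbar * Real.sqrt (2 * lam)) + 1)) : ℝ) : EReal) ≤ ξ ω) :
    ∫ ω, (if ξ ω = ⊤ then 0 else
        Real.log (1 + (1 - Real.exp (-(2 * Real.sqrt (2 * lam) * ℓ₀ ω))) /
          ((ξ ω).toReal - 1))) ∂μ ≤
      Real.log (1 + ((dbar : ℝ) / 2) * Real.exp (-(2 * Real.sqrt (2 * lam) * lbar)) *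
        ((Real.exp (4 * Real.sqrt (2 * lam) * lbar) - 1) /
          (Real.exp (2 * Real.sqrt (2 * lam) * llow) - 1))) := by
  have hlbar : 0 < lbar := lt_of_lt_of_le hllow hlord
  set s := Real.sqrt (2 * lam) with hs_def
  have hs : 0 < s := Real.sqrt_pos.mpr (by linarith)
  have hd : (0:ℝ) < dbar := by exact_mod_cast (by omega : 0 < dbar)
  -- rewrite exponents in hξbd
  rw [show 2 * llow * s = 2 * s * llow from by ring,
      show 2 * lbar * s = 2 * s * lbar from by ring] at hξbd
  set a := Real.exp (2 * s * llow) with ha_def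
  set b := Real.exp (2 * s * lbar) with hb_def
  have ha1 : 1 < a := by
    rw [ha_def, show (1:ℝ) = Real.exp 0 from Real.exp_zero.symm]
    exact Real.exp_lt_exp.mpr (by positivity)
  have hb1 : 1 < b := by
    rw [hb_def, show (1:ℝ) = Real.exp 0 from Real.exp_zero.symm]
    exact Real.exp_lt_exp.mpr (by positivity)
  have hb0 : 0 < b := by linarith
  set δ := 2 / (dbar : ℝ) * ((a - 1) / (b + 1)) with hδ_def
  have hδ : 0 < δ := by
    apply mul_pos (by positivity) (div_pos (by linarith) (by linarith))
  set K := ((dbar : ℝ) / 2) * Real.exp (-(2 * s * lbar)) *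
      ((Real.exp (4 * s * lbar) - 1) / (a - 1)) with hK_def
  have hexp4 : Real.exp (4 * s * lbar) = b * b := by
    rw [hb_def, ← Real.exp_add]; ring_nf
  have hexpneg : Real.exp (-(2 * s * lbar)) = b⁻¹ := by
    rw [hb_def, ← Real.exp_neg]
  have hK : (1 - b⁻¹) / δ = K := by
    rw [hK_def, hδ_def, hexp4, hexpneg]
    field_simp
    ring
  have hK0 : 0 < K := by
    rw [← hK]
    apply div_pos _ hδ
    have : b⁻¹ < 1 := inv_lt_one_of_one_lt₀ hb1
    linarith
  set f : Ω → ℝ := fun ω => (if ξ ω = ⊤ then 0 else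
        Real.log (1 + (1 - Real.exp (-(2 * s * ℓ₀ ω))) /
          ((ξ ω).toReal - 1))) with hf_def
  -- pointwise bounds
  have hpt : ∀ᵐ ω ∂μ, 0 ≤ f ω ∧ f ω ≤ Real.log (1 + K) := by
    filter_upwards [hℓbd, hξ1, hξbd] with ω ⟨h1, h2⟩ hx1 hxb
    by_cases htop : ξ ω = ⊤
    · have hfz : f ω = 0 := by simp [hf_def, htop]
      rw [hfz]
      exact ⟨le_refl 0, Real.log_nonneg (by linarith)⟩
    · have hnebot : ξ ω ≠ ⊥ := fun h => by
        rw [h, le_bot_iff] at hx1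
        exact absurd hx1 (by simp [← EReal.coe_one])
      have hto : (1 + δ : ℝ) ≤ (ξ ω).toReal := by
        have := EReal.toReal_le_toReal hxb (EReal.coe_ne_bot _) htop
        simpa only [EReal.toReal_coe] using this
      have hden : δ ≤ (ξ ω).toReal - 1 := by linarith
      have hnum0 : 0 ≤ 1 - Real.exp (-(2 * s * ℓ₀ ω)) := by
        have : Real.exp (-(2 * s * ℓ₀ ω)) ≤ 1 := Real.exp_le_one_iff.mpr (by nlinarith)
        linarith
      have hnum : 1 - Real.exp (-(2 * s * ℓ₀ ω)) ≤ 1 - b⁻¹ := by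
        rw [← hexpneg]
        have : Real.exp (-(2 * s * lbar)) ≤ Real.exp (-(2 * s * ℓ₀ ω)) :=
          Real.exp_le_exp.mpr (by nlinarith)
        linarith
      have hratio : (1 - Real.exp (-(2 * s * ℓ₀ ω))) / ((ξ ω).toReal - 1) ≤ K := by
        rw [← hK]
        exact div_le_div₀ (by rw [← hexpneg] at hnum ⊢; linarith [Real.exp_pos (-(2*s*lbar))]; ) hnum hδ hden
      have hratio0 : 0 ≤ (1 - Real.exp (-(2 * s * ℓ₀ ω))) / ((ξ ω).toReal - 1) :=
        div_nonneg hnum0 (by linarith)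
      have hfv : f ω = Real.log (1 + (1 - Real.exp (-(2 * s * ℓ₀ ω))) /
          ((ξ ω).toReal - 1)) := by simp [hf_def, htop]
      rw [hfv]
      refine ⟨Real.log_nonneg (by linarith), ?_⟩
      exact Real.log_le_log (by linarith) (by linarith)
  have hmeas : Measurable f := by
    apply Measurable.ite (hξmeas (measurableSet_singleton ⊤)) measurable_const
    apply Real.measurable_log.comp
    apply Measurable.add measurable_const
    apply Measurable.div
    · apply Measurable.const_sub
      exact (Real.measurable_exp.comp (hℓmeas.const_mul _).neg)
    · exact (measurable_ereal_toReal.comp hξmeas).sub measurable_const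
  have hint : Integrable f μ := by
    apply Integrable.mono' (integrable_const (Real.log (1 + K))) hmeas.aestronglyMeasurable
    filter_upwards [hpt] with ω ⟨h0, h1⟩
    rw [Real.norm_eq_abs, abs_of_nonneg h0]; exact h1
  calc ∫ ω, f ω ∂μ ≤ ∫ _, Real.log (1 + K) ∂μ := by
        apply integral_mono_ae hint (integrable_const _)
        filter_upwards [hpt] with ω h using h.2
    _ = Real.log (1 + K) := by simp
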